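/- For every k ≥ 0 such that J_k and H_k are nonsingular, with J̃_k := J*(J_k⁻¹ − J*⁻¹) and F_k := ‖F(x_k)‖, Broyden's 'bad' update satisfies τ_{k+1}² ≤ τ_k² − (F_{k+1}²/F_k²)·1/[(1 + ‖(J_k − J*)J*⁻¹‖)² · ‖J*H_k‖² · ‖(J*H_k)⁻¹‖²] + 2(τ_k‖J̃_k‖ + ‖J̃_k‖²). -/

import Mathlib

open Matrix MeasureTheory

noncomputable def specNorm {n : ℕ} (A : Matrix (Fin n) (Fin n) ℝ) : ℝ :=
  ‖Matrix.toEuclideanCLM (𝕜 := ℝ) A‖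

noncomputable def frobNorm {n : ℕ} (A : Matrix (Fin n) (Fin n) ℝ) : ℝ :=
  Real.sqrt (∑ i, ∑ j, (A i j) ^ 2)

noncomputable def vnorm {n : ℕ} (x : Fin n → ℝ) : ℝ :=
  Real.sqrt (∑ i, (x i) ^ 2)

noncomputable def intJac {n : ℕ} (J : (Fin n → ℝ) → Matrix (Fin n) (Fin n) ℝ)
    (x u : Fin n → ℝ) : Matrix (Fin n) (Fin n) ℝ :=
  Matrix.of fun i j => ∫ t in (0:ℝ)..(1:ℝ), J (x + t • u) i j

/- ### Auxiliary lemmas -/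

lemma vnorm_eq {n : ℕ} (x : Fin n → ℝ) :
    vnorm x = ‖(WithLp.equiv 2 (Fin n → ℝ)).symm x‖ := by
  rw [EuclideanSpace.norm_eq, vnorm]
  congr 1
  refine Finset.sum_congr rfl fun i _ => ?_
  simp [sq_abs]

lemma vnorm_nonneg {n : ℕ} (x : Fin n → ℝ) : 0 ≤ vnorm x := Real.sqrt_nonneg _

lemma vnorm_sq {n : ℕ} (x : Fin n → ℝ) : vnorm x ^ 2 = ∑ i, (x i) ^ 2 :=
  Real.sq_sqrt (Finset.sum_nonneg fun i _ => sq_nonneg _)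

lemma vnorm_pos {n : ℕ} {x : Fin n → ℝ} (h : x ≠ 0) : 0 < vnorm x := by
  obtain ⟨i, hi⟩ := Function.ne_iff.mp h
  refine Real.sqrt_pos.2 (Finset.sum_pos' (fun j _ => sq_nonneg _) ⟨i, Finset.mem_univ i, ?_⟩)
  have : x i ≠ 0 := by simpa using hi
  positivity

lemma vnorm_smul {n : ℕ} (c : ℝ) (v : Fin n → ℝ) : vnorm (c • v) = |c| * vnorm v := by
  rw [vnorm, vnorm]
  simp only [Pi.smul_apply, smul_eq_mul, mul_pow]
  rw [← Finset.mul_sum, Real.sqrt_mul (sq_nonneg c), Real.sqrt_sq_eq_abs]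

lemma vnorm_neg {n : ℕ} (v : Fin n → ℝ) : vnorm (-v) = vnorm v := by
  rw [vnorm, vnorm]
  simp

lemma vnorm_add_le {n : ℕ} (a b : Fin n → ℝ) : vnorm (a + b) ≤ vnorm a + vnorm b := by
  rw [vnorm_eq, vnorm_eq, vnorm_eq, WithLp.equiv_symm_apply, WithLp.toLp_add]
  exact norm_add_le _ _

lemma vnorm_sub_le {n : ℕ} (a b : Fin n → ℝ) : vnorm (a - b) ≤ vnorm a + vnorm b := by
  rw [vnorm_eq, vnorm_eq, vnorm_eq, WithLp.equiv_symm_apply, WithLp.toLp_sub]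
  exact norm_sub_le _ _

lemma specNorm_nonneg {n : ℕ} (A : Matrix (Fin n) (Fin n) ℝ) : 0 ≤ specNorm A :=
  norm_nonneg _

lemma vnorm_mulVec_le {n : ℕ} (A : Matrix (Fin n) (Fin n) ℝ) (v : Fin n → ℝ) :
    vnorm (A *ᵥ v) ≤ specNorm A * vnorm v := by
  rw [vnorm_eq, vnorm_eq, specNorm]
  have h := (Matrix.toEuclideanCLM (𝕜 := ℝ) A).le_opNorm ((WithLp.equiv 2 (Fin n → ℝ)).symm v)
  rw [WithLp.equiv_symm_apply, Matrix.toEuclideanCLM_toLp] at h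
  exact h

lemma frobNorm_nonneg {n : ℕ} (A : Matrix (Fin n) (Fin n) ℝ) : 0 ≤ frobNorm A :=
  Real.sqrt_nonneg _

lemma frobNorm_sq {n : ℕ} (A : Matrix (Fin n) (Fin n) ℝ) :
    frobNorm A ^ 2 = ∑ i, ∑ j, (A i j) ^ 2 :=
  Real.sq_sqrt (Finset.sum_nonneg fun i _ =>
    Finset.sum_nonneg fun j _ => sq_nonneg _)

lemma frob_identity {n : ℕ} (A C : Matrix (Fin n) (Fin n) ℝ) (q : Fin n → ℝ)
    (hq : ∑ j, q j ^ 2 = 1) :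
    ∑ i, ∑ j, (A i j + ((C - A) *ᵥ q) i * q j) ^ 2
      = ∑ i, ∑ j, A i j ^ 2 - ∑ i, ((A *ᵥ q) i) ^ 2 + ∑ i, ((C *ᵥ q) i) ^ 2 := by
  have hrow : ∀ i, ∑ j, (A i j + ((C - A) *ᵥ q) i * q j) ^ 2
      = (∑ j, A i j ^ 2) - ((A *ᵥ q) i) ^ 2 + ((C *ᵥ q) i) ^ 2 := by
    intro i
    have hd : ((C - A) *ᵥ q) i = (C *ᵥ q) i - (A *ᵥ q) i := by
      rw [Matrix.sub_mulVec]; rfl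
    set d := ((C - A) *ᵥ q) i with hdd
    have e1 : ∑ j, (A i j + d * q j) ^ 2
        = (∑ j, A i j ^ 2) + (2 * d) * (∑ j, A i j * q j) + d ^ 2 * (∑ j, q j ^ 2) := by
      rw [Finset.mul_sum, Finset.mul_sum, ← Finset.sum_add_distrib, ← Finset.sum_add_distrib]
      exact Finset.sum_congr rfl fun j _ => by ring
    have ha : (A *ᵥ q) i = ∑ j, A i j * q j := rfl
    rw [e1, hq, hd, ← ha]
    ring
  rw [Finset.sum_congr rfl fun i _ => hrow i, Finset.sum_add_distrib, Finset.sum_sub_distrib]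

lemma row_cs {n : ℕ} (A : Matrix (Fin n) (Fin n) ℝ) (q : Fin n → ℝ)
    (hq : ∑ j, q j ^ 2 = 1) :
    ∑ i, ((A *ᵥ q) i) ^ 2 ≤ ∑ i, ∑ j, A i j ^ 2 := by
  refine Finset.sum_le_sum fun i _ => ?_
  have hcs := Finset.sum_mul_sq_le_sq_mul_sq Finset.univ (fun j => A i j) q
  have ha : (A *ᵥ q) i = ∑ j, A i j * q j := rfl
  rw [ha]
  calc (∑ j, A i j * q j) ^ 2 ≤ (∑ j, A i j ^ 2) * (∑ j, q j ^ 2) := hcs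
    _ = ∑ j, A i j ^ 2 := by rw [hq, mul_one]

lemma ftc {n : ℕ} (F : (Fin n → ℝ) → (Fin n → ℝ))
    (J : (Fin n → ℝ) → Matrix (Fin n) (Fin n) ℝ)
    (hF : ∀ z, HasFDerivAt F (LinearMap.toContinuousLinearMap ((J z).mulVecLin)) z)
    (hJc : Continuous J) (x u : Fin n → ℝ) :
    F (x + u) - F x = intJac J x u *ᵥ u := by
  have hline : ∀ t : ℝ, HasDerivAt (fun s : ℝ => x + s • u) u t := by
    intro t
    simpa using (hasDerivAt_id t).smul_const u |>.const_add x
  have hcomp : ∀ t : ℝ, HasDerivAt (fun s : ℝ => F (x + s • u)) (J (x + t • u) *ᵥ u) t := by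
    intro t
    have := (hF (x + t • u)).comp_hasDerivAt t (hline t)
    simpa [Function.comp_def] using this
  have hcont : ∀ i j : Fin n, Continuous (fun t : ℝ => J (x + t • u) i j) := by
    intro i j
    exact ((continuous_apply j).comp ((continuous_apply i).comp hJc)).comp
      (continuous_const.add (continuous_id.smul continuous_const))
  funext i
  have hci : Continuous (fun t : ℝ => (J (x + t • u) *ᵥ u) i) := by
    simp only [Matrix.mulVec, dotProduct]
    exact continuous_finset_sum _ fun j _ => (hcont i j).mul continuous_const
  have key : ∫ t in (0:ℝ)..1, (J (x + t • u) *ᵥ u) i = F (x + u) i - F x i := by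
    have := intervalIntegral.integral_eq_sub_of_hasDerivAt
      (f := fun t : ℝ => F (x + t • u) i)
      (f' := fun t : ℝ => (J (x + t • u) *ᵥ u) i)
      (a := 0) (b := 1)
      (fun t _ => (hasDerivAt_pi.mp (hcomp t)) i)
      (hci.intervalIntegrable 0 1)
    simpa using this
  have swap : (intJac J x u *ᵥ u) i = ∫ t in (0:ℝ)..1, (J (x + t • u) *ᵥ u) i := by
    simp only [Matrix.mulVec, dotProduct, intJac, Matrix.of_apply]
    rw [intervalIntegral.integral_finset_sum]
    · exact Finset.sum_congr rfl fun j _ => (intervalIntegral.integral_mul_const _ _).symm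
    · exact fun j _ => (((hcont i j).mul continuous_const).intervalIntegrable 0 1)
  simp [swap, key]

set_option maxHeartbeats 1000000 in
/-- One-step Frobenius-measure inequality for Broyden's "bad" update with the residual ratio
`F_{k+1}²/F_k²`:
`τ_{k+1}² ≤ τ_k² − (F_{k+1}²/F_k²)·[(1 + ‖(J_k − J*)J*⁻¹‖)²‖J*H_k‖²‖(J*H_k)⁻¹‖²]⁻¹
  + 2(τ_k‖J̃_k‖ + ‖J̃_k‖²)` whenever `J_k` (and `H_k`) are nonsingular. -/
theorem stmt11 {n : ℕ} (F : (Fin n → ℝ) → (Fin n → ℝ))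
    (J : (Fin n → ℝ) → Matrix (Fin n) (Fin n) ℝ)
    (hF : ∀ z, HasFDerivAt F (LinearMap.toContinuousLinearMap ((J z).mulVecLin)) z)
    (hJc : Continuous J)
    (xs : Fin n → ℝ) (hxs : F xs = 0) (hJs : IsUnit (J xs).det)
    (x : ℕ → Fin n → ℝ) (H : ℕ → Matrix (Fin n) (Fin n) ℝ)
    (hHk : ∀ k, IsUnit (H k).det) (hFk : ∀ k, F (x k) ≠ 0)
    (hyk : ∀ k, F (x (k + 1)) - F (x k) ≠ 0)
    (hx : ∀ k, x (k + 1) = x k - H k *ᵥ F (x k))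
    (hH : ∀ k, H (k + 1) = H k +
        ((F (x (k + 1)) - F (x k)) ⬝ᵥ (F (x (k + 1)) - F (x k)))⁻¹ •
          vecMulVec (x (k + 1) - x k - H k *ᵥ (F (x (k + 1)) - F (x k)))
            (F (x (k + 1)) - F (x k))) :
    ∀ k : ℕ, IsUnit (intJac J (x k) (x (k + 1) - x k)).det →
      frobNorm (J xs * (H (k + 1) - (J xs)⁻¹)) ^ 2 ≤
        frobNorm (J xs * (H k - (J xs)⁻¹)) ^ 2
          - (vnorm (F (x (k + 1))) ^ 2 / vnorm (F (x k)) ^ 2) *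
              (1 / ((1 + specNorm ((intJac J (x k) (x (k + 1) - x k) - J xs) * (J xs)⁻¹)) ^ 2 *
                specNorm (J xs * H k) ^ 2 * specNorm ((J xs * H k)⁻¹) ^ 2))
          + 2 * (frobNorm (J xs * (H k - (J xs)⁻¹)) *
                specNorm (J xs * ((intJac J (x k) (x (k + 1) - x k))⁻¹ - (J xs)⁻¹))
              + specNorm (J xs * ((intJac J (x k) (x (k + 1) - x k))⁻¹ - (J xs)⁻¹)) ^ 2) := by
  intro k hJk
  set u : Fin n → ℝ := x (k + 1) - x k with hu_def
  set y : Fin n → ℝ := F (x (k + 1)) - F (x k) with hy_def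
  set Js : Matrix (Fin n) (Fin n) ℝ := J xs with hJs_def
  set Jk : Matrix (Fin n) (Fin n) ℝ := intJac J (x k) u with hJk_def
  set A : Matrix (Fin n) (Fin n) ℝ := Js * (H k - Js⁻¹) with hA_def
  set C : Matrix (Fin n) (Fin n) ℝ := Js * (Jk⁻¹ - Js⁻¹) with hC_def
  set M : Matrix (Fin n) (Fin n) ℝ := Js * (H (k + 1) - Js⁻¹) with hM_def
  -- Fundamental theorem of calculus: y = Jk * u
  have hyu : y = Jk *ᵥ u := by
    have h := ftc F J hF hJc (x k) u
    have hxx : x k + u = x (k + 1) := by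
      rw [hu_def]; abel
    rw [hxx] at h
    exact h
  -- step equation
  have hu_eq : u = -(H k *ᵥ F (x k)) := by
    rw [hu_def, hx k]; abel
  -- norms of y
  have hvy : 0 < vnorm y := vnorm_pos (hyk k)
  set vy : ℝ := vnorm y with hvy_def
  set q : Fin n → ℝ := vy⁻¹ • y with hq_def
  have hq : ∑ j, q j ^ 2 = 1 := by
    have : ∑ j, q j ^ 2 = vy⁻¹ ^ 2 * ∑ j, y j ^ 2 := by
      rw [Finset.mul_sum]
      exact Finset.sum_congr rfl fun j _ => by
        simp [hq_def, mul_pow]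
    rw [this, ← vnorm_sq, ← hvy_def]
    field_simp
  have hvq : vnorm q = 1 := by
    rw [hq_def, vnorm_smul, abs_of_nonneg (inv_nonneg.mpr hvy.le), ← hvy_def]
    field_simp
  -- basic mulVec identities
  have hAy : A *ᵥ y = (Js * H k) *ᵥ y - y := by
    have h1 : A = Js * H k - 1 := by
      rw [hA_def, Matrix.mul_sub, Matrix.mul_nonsing_inv Js hJs]
    rw [h1, Matrix.sub_mulVec, Matrix.one_mulVec]
  have hCy : C *ᵥ y = Js *ᵥ u - y := by
    have hinv : Jk⁻¹ *ᵥ y = u := by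
      rw [hyu, Matrix.mulVec_mulVec, Matrix.nonsing_inv_mul Jk hJk, Matrix.one_mulVec]
    have h1 : C = Js * Jk⁻¹ - 1 := by
      rw [hC_def, Matrix.mul_sub, Matrix.mul_nonsing_inv Js hJs]
    rw [h1, Matrix.sub_mulVec, Matrix.one_mulVec, ← Matrix.mulVec_mulVec, hinv]
  -- the updated matrix entrywise
  have hw : Js *ᵥ (u - H k *ᵥ y) = (C - A) *ᵥ y := by
    rw [Matrix.sub_mulVec, hAy, hCy, Matrix.mulVec_sub, ← Matrix.mulVec_mulVec]
    abel
  have hvecmul : ∀ i j, (Js * vecMulVec (u - H k *ᵥ y) y) i j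
      = (Js *ᵥ (u - H k *ᵥ y)) i * y j := by
    intro i j
    rw [Matrix.mul_apply,
      show (Js *ᵥ (u - H k *ᵥ y)) i = ∑ l, Js i l * (u - H k *ᵥ y) l from rfl,
      Finset.sum_mul]
    exact Finset.sum_congr rfl fun l _ => by rw [Matrix.vecMulVec_apply]; ring
  have hMplus : M = A + (y ⬝ᵥ y)⁻¹ • (Js * vecMulVec (u - H k *ᵥ y) y) := by
    rw [hM_def, hH k, ← hy_def, ← hu_def]
    rw [show H k + (y ⬝ᵥ y)⁻¹ • vecMulVec (u - H k *ᵥ y) y - Js⁻¹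
        = (H k - Js⁻¹) + (y ⬝ᵥ y)⁻¹ • vecMulVec (u - H k *ᵥ y) y from by abel]
    rw [Matrix.mul_add, Matrix.mul_smul, ← hA_def]
  have hdot : (y ⬝ᵥ y) = vy ^ 2 := by
    rw [hvy_def, vnorm_sq, dotProduct]
    exact Finset.sum_congr rfl fun i _ => (sq (y i)).symm
  have hMent : ∀ i j, M i j = A i j + ((C - A) *ᵥ q) i * q j := by
    intro i j
    have h1 : M i j = A i j + (y ⬝ᵥ y)⁻¹ * (((C - A) *ᵥ y) i * y j) := by
      rw [hMplus]
      simp only [Matrix.add_apply, Matrix.smul_apply, smul_eq_mul, hvecmul i j, hw]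
    have hCAq : ((C - A) *ᵥ q) i = vy⁻¹ * ((C - A) *ᵥ y) i := by
      rw [hq_def, Matrix.mulVec_smul]; rfl
    have hqj : q j = vy⁻¹ * y j := rfl
    rw [h1, hdot, hCAq, hqj, sq, mul_inv]
    ring
  -- Frobenius identity
  have hfrob : frobNorm M ^ 2 = frobNorm A ^ 2 - vnorm (A *ᵥ q) ^ 2 + vnorm (C *ᵥ q) ^ 2 := by
    rw [frobNorm_sq, frobNorm_sq, vnorm_sq, vnorm_sq]
    rw [Finset.sum_congr rfl fun i _ => Finset.sum_congr rfl fun j _ => by rw [hMent i j]]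
    exact frob_identity A C q hq
  set τ : ℝ := frobNorm A with hτ_def
  set a : ℝ := vnorm (A *ᵥ q) with ha_def
  set b : ℝ := vnorm (C *ᵥ q) with hb_def
  set e : ℝ := specNorm C with he_def
  set δ : ℝ := specNorm ((Jk - Js) * Js⁻¹) with hδ_def
  set sJH : ℝ := specNorm (Js * H k) with hsJH_def
  set sinv : ℝ := specNorm ((Js * H k)⁻¹) with hsinv_def
  set F0 : ℝ := vnorm (F (x k)) with hF0_def
  set F1 : ℝ := vnorm (F (x (k + 1))) with hF1_def
  set g : ℝ := vnorm ((A - C) *ᵥ q) with hg_def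
  have hτ0 : 0 ≤ τ := frobNorm_nonneg _
  have ha0 : 0 ≤ a := vnorm_nonneg _
  have hb0 : 0 ≤ b := vnorm_nonneg _
  have he0 : 0 ≤ e := specNorm_nonneg _
  have hδ0 : 0 ≤ δ := specNorm_nonneg _
  have hg0 : 0 ≤ g := vnorm_nonneg _
  have hF0pos : 0 < F0 := vnorm_pos (hFk k)
  have hF1pos : 0 < F1 := vnorm_pos (hFk (k + 1))
  -- a ≤ τ
  have ha_le : a ≤ τ := by
    rw [ha_def, hτ_def, vnorm, frobNorm]
    exact Real.sqrt_le_sqrt (row_cs A q hq)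
  -- b ≤ e
  have hb_le : b ≤ e := by
    have := vnorm_mulVec_le C q
    rw [hvq, mul_one] at this
    exact this
  -- g ≤ a + b
  have hg_le : g ≤ a + b := by
    rw [hg_def, Matrix.sub_mulVec]
    exact vnorm_sub_le _ _
  -- (A - C) *ᵥ y = (Js * H k) *ᵥ F (x (k+1))
  have hACy : (A - C) *ᵥ y = (Js * H k) *ᵥ F (x (k + 1)) := by
    have h1 : Js *ᵥ -(H k *ᵥ F (x k)) = -((Js * H k) *ᵥ F (x k)) := by
      rw [Matrix.mulVec_neg, Matrix.mulVec_mulVec]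
    rw [Matrix.sub_mulVec, hAy, hCy, hu_eq, h1,
      show (Js * H k) *ᵥ y - y - (-((Js * H k) *ᵥ F (x k)) - y)
        = (Js * H k) *ᵥ y + (Js * H k) *ᵥ F (x k) from by abel,
      ← Matrix.mulVec_add, show y + F (x k) = F (x (k + 1)) from by rw [hy_def]; abel]
  have hACq : (A - C) *ᵥ q = vy⁻¹ • ((Js * H k) *ᵥ F (x (k + 1))) := by
    rw [hq_def, Matrix.mulVec_smul, hACy]
  have hgval : g * vy = vnorm ((Js * H k) *ᵥ F (x (k + 1))) := by
    rw [hg_def, hACq, vnorm_smul, abs_of_nonneg (inv_nonneg.mpr hvy.le)]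
    field_simp
  -- F1 ≤ sinv * (g * vy)
  have hJsH_det : IsUnit (Js * H k).det := by
    rw [Matrix.det_mul]; exact hJs.mul (hHk k)
  have hF1_le : F1 ≤ sinv * (g * vy) := by
    have hcancel : (Js * H k)⁻¹ *ᵥ ((Js * H k) *ᵥ F (x (k + 1))) = F (x (k + 1)) := by
      rw [Matrix.mulVec_mulVec, Matrix.nonsing_inv_mul _ hJsH_det, Matrix.one_mulVec]
    have := vnorm_mulVec_le (Js * H k)⁻¹ ((Js * H k) *ᵥ F (x (k + 1)))
    rw [hcancel, ← hgval] at this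
    exact this
  -- vy ≤ (1 + δ) * (sJH * F0)
  have hvy_le : vy ≤ (1 + δ) * (sJH * F0) := by
    have hz : Js *ᵥ u = -((Js * H k) *ᵥ F (x k)) := by
      rw [hu_eq, Matrix.mulVec_neg, Matrix.mulVec_mulVec]
    have hy2 : y = Js *ᵥ u + ((Jk - Js) * Js⁻¹) *ᵥ (Js *ᵥ u) := by
      have hu2 : u = Js⁻¹ *ᵥ (Js *ᵥ u) := by
        rw [Matrix.mulVec_mulVec, Matrix.nonsing_inv_mul _ hJs, Matrix.one_mulVec]
      calc y = Jk *ᵥ u := hyu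
        _ = Jk *ᵥ (Js⁻¹ *ᵥ (Js *ᵥ u)) := by rw [← hu2]
        _ = (Jk * Js⁻¹) *ᵥ (Js *ᵥ u) := Matrix.mulVec_mulVec _ _ _
        _ = (1 + (Jk - Js) * Js⁻¹) *ᵥ (Js *ᵥ u) := by
            rw [show (1 : Matrix (Fin n) (Fin n) ℝ) + (Jk - Js) * Js⁻¹
                = Jk * Js⁻¹ from by
              rw [Matrix.sub_mul, ← Matrix.mul_nonsing_inv Js hJs]; abel]
        _ = Js *ᵥ u + ((Jk - Js) * Js⁻¹) *ᵥ (Js *ᵥ u) := by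
            rw [Matrix.add_mulVec, Matrix.one_mulVec]
    have hzn : vnorm (Js *ᵥ u) ≤ sJH * F0 := by
      rw [hz, vnorm_neg]
      exact vnorm_mulVec_le _ _
    calc vy = vnorm (Js *ᵥ u + ((Jk - Js) * Js⁻¹) *ᵥ (Js *ᵥ u)) := by rw [hvy_def, ← hy2]
      _ ≤ vnorm (Js *ᵥ u) + vnorm (((Jk - Js) * Js⁻¹) *ᵥ (Js *ᵥ u)) := vnorm_add_le _ _
      _ ≤ vnorm (Js *ᵥ u) + δ * vnorm (Js *ᵥ u) := by
          have := vnorm_mulVec_le ((Jk - Js) * Js⁻¹) (Js *ᵥ u)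
          linarith
      _ = (1 + δ) * vnorm (Js *ᵥ u) := by ring
      _ ≤ (1 + δ) * (sJH * F0) := by
          apply mul_le_mul_of_nonneg_left hzn
          linarith
  -- positivity of sJH and sinv
  have hsJH0 : 0 ≤ sJH := specNorm_nonneg _
  have hsinv0 : 0 ≤ sinv := specNorm_nonneg _
  clear_value τ a b e δ sJH sinv F0 F1 g vy q u y Js Jk A C M
  have hsJHpos : 0 < sJH := by
    by_contra h
    push_neg at h
    have h1 : sJH * F0 ≤ 0 := mul_nonpos_iff.2 (Or.inr ⟨h, hF0pos.le⟩)
    have h2 : (1 + δ) * (sJH * F0) ≤ 0 := mul_nonpos_iff.2 (Or.inl ⟨by linarith, h1⟩)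
    linarith
  have hsinvpos : 0 < sinv := by
    by_contra h
    push_neg at h
    have h1 : 0 ≤ g * vy := mul_nonneg hg0 hvy.le
    have h2 : sinv * (g * vy) ≤ 0 := mul_nonpos_iff.2 (Or.inr ⟨h, h1⟩)
    linarith
  -- R ≤ g ^ 2
  have hδpos : (0:ℝ) < 1 + δ := by linarith
  have hchain : F1 ≤ sinv * ((1 + δ) * (sJH * F0)) * g := by
    calc F1 ≤ sinv * (g * vy) := hF1_le
      _ ≤ sinv * (g * ((1 + δ) * (sJH * F0))) := by
          apply mul_le_mul_of_nonneg_left _ hsinv0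
          exact mul_le_mul_of_nonneg_left hvy_le hg0
      _ = sinv * ((1 + δ) * (sJH * F0)) * g := by ring
  have hR_le : (F1 ^ 2 / F0 ^ 2) * (1 / ((1 + δ) ^ 2 * sJH ^ 2 * sinv ^ 2)) ≤ g ^ 2 := by
    have hD : (0:ℝ) < F0 ^ 2 * ((1 + δ) ^ 2 * sJH ^ 2 * sinv ^ 2) := by positivity
    rw [div_mul_div_comm, mul_one, div_le_iff₀ hD]
    have hsq : F1 ^ 2 ≤ (sinv * ((1 + δ) * (sJH * F0)) * g) ^ 2 :=
      pow_le_pow_left₀ hF1pos.le hchain 2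
    calc F1 ^ 2 ≤ (sinv * ((1 + δ) * (sJH * F0)) * g) ^ 2 := hsq
      _ = g ^ 2 * (F0 ^ 2 * ((1 + δ) ^ 2 * sJH ^ 2 * sinv ^ 2)) := by ring
  -- final arithmetic
  rw [hfrob]
  have hab : a * b ≤ τ * e := mul_le_mul ha_le hb_le hb0 hτ0
  have hb2 : b ^ 2 ≤ e ^ 2 := pow_le_pow_left₀ hb0 hb_le 2
  have hg2 : g ^ 2 ≤ a ^ 2 + 2 * (a * b) + b ^ 2 := by
    calc g ^ 2 ≤ (a + b) ^ 2 := pow_le_pow_left₀ hg0 hg_le 2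
      _ = a ^ 2 + 2 * (a * b) + b ^ 2 := by ring
  linarith
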